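/- Fix integers s ≥ 2, d ≥ 2 and reals 0 < K_2 < K_1. Let v ∈ ℝ^d have one coordinate equal to 1 and all other d−1 coordinates v_j satisfying K_2/(d−1) ≤ v_j ≤ K_1/(d−1). Define the NUQSGD quantization variance Δ_NUQ = ‖v‖² · Σ_{i=1}^d σ²_{L̂}(|v_i|/‖v‖) with the levels L̂, and the QSGDinf quantization variance Δ_Qinf = ‖v‖_∞² · Σ_{i=1}^d σ²_U(|v_i|/‖v‖_∞) with the uniform levels U = (0, 1/s, 2/s, …, (s−1)/s, 1), where ‖v‖_∞ = max_i |v_i|. If K_1/((d−1)·√(1 + K_2²/(d−1))) < 2^{−s} and (1 + K_1²/(d−1))·K_1·(K_1/(4(d−1)) + 2^{−s}) < K_2·(1/s − K_1/(d−1)), then Δ_NUQ < Δ_Qinf. -/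

import Mathlib

noncomputable section

/-- The index of the quantization bin containing the normalized coordinate `r`. -/
def levIdx (l : ℕ → ℝ) (s : ℕ) (r : ℝ) : ℕ := sSup {j | j ≤ s ∧ l j ≤ r}

/-- The per-coordinate variance of unbiased two-point stochastic quantization of `r` to the
adjacent levels: `σ²_L(r) = (l_{ℓ(r)+1} − r)(r − l_{ℓ(r)})`. -/
def sigmaSq (l : ℕ → ℝ) (s : ℕ) (r : ℝ) : ℝ :=
  (l (levIdx l s r + 1) - r) * (r - l (levIdx l s r))

/-- The exponentially spaced NUQSGD levels `(0, 2^{-s}, 2^{1-s}, …, 2^{-1}, 1)`: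
`l 0 = 0` and `l j = 2^{j-1-s}` for `j = 1, …, s+1`. -/
def nuqLevels (s : ℕ) : ℕ → ℝ :=
  fun j => if j = 0 then 0 else 2 ^ ((j : ℤ) - 1 - (s : ℤ))

/-- The uniformly spaced QSGDinf levels `(0, 1/s, 2/s, …, (s−1)/s, 1)`: `l j = j/s`
(the top level is `l s = 1`, so there are `s − 1` internal levels). -/
def unifLevels (s : ℕ) : ℕ → ℝ := fun j => (j : ℝ) / (s : ℝ)

lemma levIdx_eq (l : ℕ → ℝ) (s : ℕ) (r : ℝ) (k : ℕ)
    (hk : k ≤ s) (hlk : l k ≤ r) (hmax : ∀ j, j ≤ s → l j ≤ r → j ≤ k) :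
    levIdx l s r = k := by
  have hmem : k ∈ {j | j ≤ s ∧ l j ≤ r} := ⟨hk, hlk⟩
  have hbdd : BddAbove {j | j ≤ s ∧ l j ≤ r} := ⟨s, fun j hj => hj.1⟩
  exact le_antisymm (csSup_le ⟨k, hmem⟩ (fun j hj => hmax j hj.1 hj.2)) (le_csSup hbdd hmem)

lemma sigmaSq_nuq_low (s : ℕ) (r : ℝ) (hr0 : 0 ≤ r) (hr : r < (2:ℝ) ^ (-(s:ℤ))) :
    sigmaSq (nuqLevels s) s r = ((2:ℝ) ^ (-(s:ℤ)) - r) * r := by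
  have hidx : levIdx (nuqLevels s) s r = 0 := by
    apply levIdx_eq _ _ _ 0 (Nat.zero_le _) (by simp [nuqLevels, hr0])
    intro j hj hle
    by_contra hj0
    have hj1 : 1 ≤ j := Nat.one_le_iff_ne_zero.mpr (by omega)
    have hval : nuqLevels s j = 2 ^ ((j : ℤ) - 1 - (s : ℤ)) := by
      simp [nuqLevels, Nat.one_le_iff_ne_zero.mp hj1]
    have hge : (2:ℝ) ^ (-(s:ℤ)) ≤ 2 ^ ((j : ℤ) - 1 - (s : ℤ)) := by
      apply zpow_le_zpow_right₀ one_le_two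
      omega
    rw [hval] at hle
    linarith
  simp only [sigmaSq, hidx]
  have h1 : nuqLevels s 1 = (2:ℝ) ^ (-(s:ℤ)) := by
    simp only [nuqLevels]
    norm_num
  have h0 : nuqLevels s 0 = 0 := by simp [nuqLevels]
  rw [h1, h0]
  ring

/-- On `[2^{-s}, 1)` the NUQSGD per-coordinate variance is at most `(1-r²)/(4r²)`. -/
lemma sigmaSq_nuq_le (s : ℕ) (hs : 1 ≤ s) (r : ℝ)
    (h1 : (2:ℝ) ^ (-(s:ℤ)) ≤ r) (h2 : r < 1) :
    sigmaSq (nuqLevels s) s r ≤ (1 - r ^ 2) / (4 * r ^ 2) := by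
  have hrpos : 0 < r := lt_of_lt_of_le (by positivity) h1
  have h1mem : 1 ∈ {j | j ≤ s ∧ nuqLevels s j ≤ r} := by
    refine ⟨hs, ?_⟩
    have : nuqLevels s 1 = (2:ℝ) ^ (-(s:ℤ)) := by
      simp only [nuqLevels]; norm_num
    rw [this]; exact h1
  have hbdd : BddAbove {j | j ≤ s ∧ nuqLevels s j ≤ r} := ⟨s, fun j hj => hj.1⟩
  have hmem : levIdx (nuqLevels s) s r ∈ {j | j ≤ s ∧ nuqLevels s j ≤ r} :=
    Nat.sSup_mem ⟨1, h1mem⟩ hbdd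
  set k := levIdx (nuqLevels s) s r with hk
  have hk1 : 1 ≤ k := le_csSup hbdd h1mem
  have hks : k ≤ s := hmem.1
  have hlk : nuqLevels s k ≤ r := hmem.2
  have hup : r < nuqLevels s (k + 1) := by
    by_cases h : k = s
    · have hval : nuqLevels s (s + 1) = 1 := by
        simp only [nuqLevels, Nat.succ_ne_zero, if_false]
        have : ((s + 1 : ℕ) : ℤ) - 1 - (s : ℤ) = 0 := by push_cast; ring
        rw [this]; norm_num
      rw [h, hval]; exact h2
    · by_contra hc
      push_neg at hc
      have hmem2 : k + 1 ∈ {j | j ≤ s ∧ nuqLevels s j ≤ r} := ⟨by omega, hc⟩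
      have hlek : k + 1 ≤ k := le_csSup hbdd hmem2
      omega
  have hkne : k ≠ 0 := by omega
  have hlval : nuqLevels s k = (2:ℝ) ^ ((k:ℤ) - 1 - (s:ℤ)) := by simp [nuqLevels, hkne]
  have huval : nuqLevels s (k + 1) = 2 * (2:ℝ) ^ ((k:ℤ) - 1 - (s:ℤ)) := by
    simp only [nuqLevels, Nat.succ_ne_zero, if_false]
    rw [show ((k + 1 : ℕ) : ℤ) - 1 - (s:ℤ) = ((k:ℤ) - 1 - (s:ℤ)) + 1 by push_cast; ring,
      zpow_add_one₀ (by norm_num : (2:ℝ) ≠ 0)]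
    ring
  set l : ℝ := (2:ℝ) ^ ((k:ℤ) - 1 - (s:ℤ)) with hldef
  have hlpos : 0 < l := by positivity
  have hlr : l ≤ r := by rw [hlval] at hlk; exact hlk
  have hru : r < 2 * l := by rw [huval] at hup; exact hup
  have h2l1 : 2 * l ≤ 1 := by
    have he : (2:ℝ) * l = 2 ^ ((k:ℤ) - (s:ℤ)) := by
      rw [hldef, show (k:ℤ) - (s:ℤ) = ((k:ℤ) - 1 - (s:ℤ)) + 1 from by ring,
        zpow_add_one₀ (by norm_num : (2:ℝ) ≠ 0)]
      ring
    rw [he]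
    calc (2:ℝ) ^ ((k:ℤ) - (s:ℤ)) ≤ 2 ^ (0:ℤ) :=
          zpow_le_zpow_right₀ one_le_two (by omega)
      _ = 1 := by norm_num
  have hσ : sigmaSq (nuqLevels s) s r = (2 * l - r) * (r - l) := by
    simp only [sigmaSq, ← hk, huval, hlval]
  rw [hσ, le_div_iff₀ (by positivity)]
  rcases le_or_gt r (1/2) with hhalf | hhalf
  · have hp1 : (2 * l - r) * (r - l) ≤ l ^ 2 / 4 := by nlinarith [sq_nonneg (3 * l - 2 * r)]
    have hp2 : (0:ℝ) ≤ (2 * l - r) * (r - l) := mul_nonneg (by linarith) (by linarith)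
    have hr2 : r ^ 2 ≤ 1 / 4 := by nlinarith
    have hl2 : l ^ 2 ≤ r ^ 2 := by nlinarith
    have hq1 := mul_le_mul_of_nonneg_right hp1 (show (0:ℝ) ≤ 4 * r ^ 2 by positivity)
    have hq2 := mul_le_mul_of_nonneg_right hl2 (sq_nonneg r)
    have hq3 := mul_le_mul hr2 hr2 (sq_nonneg r) (by norm_num)
    nlinarith [hq1, hq2, hq3]
  · have hl14 : (1:ℝ) / 4 < l := by linarith
    have hexp : (k:ℤ) - 1 - (s:ℤ) = -1 := by
      by_contra hne
      have hlt : (k:ℤ) - 1 - (s:ℤ) ≤ -2 := by omega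
      have : l ≤ (2:ℝ) ^ (-2:ℤ) := zpow_le_zpow_right₀ one_le_two hlt
      norm_num at this
      linarith
    have hl12 : l = 1 / 2 := by rw [hldef, hexp]; norm_num
    rw [hl12]
    nlinarith [mul_nonneg (sq_nonneg (1 - r))
      (show (0:ℝ) ≤ 4 * r ^ 2 + 2 * r + 1 by positivity)]

lemma sigmaSq_unif_low (s : ℕ) (hs : 1 ≤ s) (r : ℝ) (hr0 : 0 ≤ r) (hr : r < 1 / (s:ℝ)) :
    sigmaSq (unifLevels s) (s - 1) r = (1 / (s:ℝ) - r) * r := by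
  have hspos : (0:ℝ) < s := by exact_mod_cast hs
  have hidx : levIdx (unifLevels s) (s - 1) r = 0 := by
    apply levIdx_eq _ _ _ 0 (Nat.zero_le _) (by simp [unifLevels, hr0])
    intro j hj hle
    by_contra hj0
    have hj1 : (1:ℝ) ≤ j := by exact_mod_cast Nat.one_le_iff_ne_zero.mpr (by omega)
    have : (1:ℝ) / s ≤ (j:ℝ) / s := by gcongr
    simp only [unifLevels] at hle
    linarith
  simp only [sigmaSq, hidx, unifLevels]
  push_cast
  ring

lemma sigmaSq_unif_one (s : ℕ) (hs : 1 ≤ s) :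
    sigmaSq (unifLevels s) (s - 1) 1 = 0 := by
  have hspos : (0:ℝ) < s := by exact_mod_cast hs
  have hidx : levIdx (unifLevels s) (s - 1) 1 = s - 1 := by
    apply levIdx_eq _ _ _ (s - 1) le_rfl
    · simp only [unifLevels]
      rw [div_le_one hspos]
      exact_mod_cast Nat.sub_le s 1
    · intro j hj _; exact hj
  simp only [sigmaSq, hidx]
  have hsum : s - 1 + 1 = s := Nat.succ_pred_eq_of_pos (by omega : 0 < s)
  rw [hsum]
  simp only [unifLevels]
  rw [div_self (ne_of_gt hspos)]
  ring

set_option maxHeartbeats 4000000 in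
/-- **Theorem 14 (NUQSGD vs QSGDinf)**: for a vector with one coordinate equal to `1` and the
other `d − 1` coordinates in `[K₂/(d−1), K₁/(d−1)]`, under the stated conditions on `d`, `s`,
`K₁`, `K₂`, the quantization variance of NUQSGD (Euclidean normalization, levels `L̂`) is
strictly smaller than that of QSGDinf (max-norm normalization, uniform levels). -/
theorem nuqsgd_variance_lt_qsgdinf
    (s d : ℕ) (hs : 2 ≤ s) (hd : 2 ≤ d)
    (K1 K2 : ℝ) (hK2 : 0 < K2) (hK12 : K2 < K1)
    (v : EuclideanSpace ℝ (Fin d)) (i0 : Fin d)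
    (hvi0 : v i0 = 1)
    (hvj : ∀ j : Fin d, j ≠ i0 →
      K2 / ((d:ℝ) - 1) ≤ v j ∧ v j ≤ K1 / ((d:ℝ) - 1))
    (hcond1 : K1 / (((d:ℝ) - 1) * Real.sqrt (1 + K2 ^ 2 / ((d:ℝ) - 1))) < (2:ℝ) ^ (-(s:ℤ)))
    (hcond2 : (1 + K1 ^ 2 / ((d:ℝ) - 1)) * K1 * (K1 / (4 * ((d:ℝ) - 1)) + (2:ℝ) ^ (-(s:ℤ))) <
      K2 * (1 / (s:ℝ) - K1 / ((d:ℝ) - 1))) :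
    ‖v‖ ^ 2 * ∑ i, sigmaSq (nuqLevels s) s (|v i| / ‖v‖) <
      (⨆ i, |v i|) ^ 2 * ∑ i, sigmaSq (unifLevels s) (s - 1) (|v i| / ⨆ i, |v i|) := by
  have hdR : (2:ℝ) ≤ (d:ℝ) := by exact_mod_cast hd
  have hD1 : (1:ℝ) ≤ (d:ℝ) - 1 := by linarith
  have hDpos : (0:ℝ) < (d:ℝ) - 1 := by linarith
  have hK1 : 0 < K1 := hK2.trans hK12
  have hsR : (2:ℝ) ≤ (s:ℝ) := by exact_mod_cast hs
  have hsPos : (0:ℝ) < (s:ℝ) := by linarith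
  have h2s : (0:ℝ) < (2:ℝ) ^ (-(s:ℤ)) := by positivity
  have hs1 : 1 ≤ s := by omega
  -- positivity of coordinates
  have hvpos : ∀ j, j ≠ i0 → 0 < v j := fun j hj =>
    lt_of_lt_of_le (div_pos hK2 hDpos) (hvj j hj).1
  have hvnn : ∀ i, 0 ≤ v i := by
    intro i
    by_cases h : i = i0
    · rw [h, hvi0]; norm_num
    · exact (hvpos i h).le
  have habs : ∀ i, |v i| = v i := fun i => abs_of_nonneg (hvnn i)
  -- slack : K1/(d-1) < 1/s
  have hlhs_pos : 0 < (1 + K1 ^ 2 / ((d:ℝ) - 1)) * K1 *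
      (K1 / (4 * ((d:ℝ) - 1)) + (2:ℝ) ^ (-(s:ℤ))) := by positivity
  have hslack : 0 < 1 / (s:ℝ) - K1 / ((d:ℝ) - 1) := by
    nlinarith [hlhs_pos.trans hcond2, hK2]
  have hK1D : K1 / ((d:ℝ) - 1) < 1 / (s:ℝ) := by linarith
  have hXnn : 0 ≤ K1 ^ 2 / ((d:ℝ) - 1) := by positivity
  have he2 : K2 * (1 / (s:ℝ) - K1 / ((d:ℝ) - 1)) < K1 * (1 / (s:ℝ)) := by
    have h0 : 0 < K2 * (K1 / ((d:ℝ) - 1)) := by positivity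
    nlinarith [mul_lt_mul_of_pos_right hK12 (show (0:ℝ) < 1 / (s:ℝ) by positivity)]
  -- (1+X) * 2^{-s} < 1/s
  have h2sX : (1 + K1 ^ 2 / ((d:ℝ) - 1)) * (2:ℝ) ^ (-(s:ℤ)) < 1 / (s:ℝ) := by
    have e1 : (1 + K1 ^ 2 / ((d:ℝ) - 1)) * K1 * (2:ℝ) ^ (-(s:ℤ)) ≤
        (1 + K1 ^ 2 / ((d:ℝ) - 1)) * K1 *
          (K1 / (4 * ((d:ℝ) - 1)) + (2:ℝ) ^ (-(s:ℤ))) := by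
      have hpos : (0:ℝ) ≤ (1 + K1 ^ 2 / ((d:ℝ) - 1)) * K1 * (K1 / (4 * ((d:ℝ) - 1))) := by
        positivity
      nlinarith
    have h1 : K1 * ((1 + K1 ^ 2 / ((d:ℝ) - 1)) * (2:ℝ) ^ (-(s:ℤ))) < K1 * (1 / (s:ℝ)) := by
      nlinarith [e1.trans_lt (hcond2.trans he2)]
    exact lt_of_mul_lt_mul_left h1 hK1.le
  -- norm facts
  have hnormsq : ‖v‖ ^ 2 = ∑ i, (v i) ^ 2 := by
    rw [EuclideanSpace.norm_eq, Real.sq_sqrt (by positivity)]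
    simp [sq_abs]
  set E := Finset.univ.erase i0 with hE
  have hsplit : ∑ i, (v i) ^ 2 = 1 + ∑ j ∈ E, (v j) ^ 2 := by
    rw [← Finset.add_sum_erase _ _ (Finset.mem_univ i0), hvi0, one_pow]
  have hcardE : ((E.card : ℝ)) = (d:ℝ) - 1 := by
    rw [hE, Finset.card_erase_of_mem (Finset.mem_univ i0), Finset.card_univ, Fintype.card_fin,
      Nat.cast_sub (by omega), Nat.cast_one]
  set S := ∑ j ∈ E, (v j) ^ 2 with hSdef
  have hS_ub : S ≤ K1 ^ 2 / ((d:ℝ) - 1) := by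
    calc S ≤ ∑ _j ∈ E, (K1 / ((d:ℝ) - 1)) ^ 2 := by
          apply Finset.sum_le_sum
          intro j hj
          have hmem := hvj j (Finset.ne_of_mem_erase hj)
          nlinarith [hvpos j (Finset.ne_of_mem_erase hj)]
      _ = ((d:ℝ) - 1) * (K1 / ((d:ℝ) - 1)) ^ 2 := by
          rw [Finset.sum_const, nsmul_eq_mul, hcardE]
      _ = K1 ^ 2 / ((d:ℝ) - 1) := by field_simp
  have hS_lb : K2 ^ 2 / ((d:ℝ) - 1) ≤ S := by
    calc K2 ^ 2 / ((d:ℝ) - 1) = ((d:ℝ) - 1) * (K2 / ((d:ℝ) - 1)) ^ 2 := by field_simp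
      _ = ∑ _j ∈ E, (K2 / ((d:ℝ) - 1)) ^ 2 := by
          rw [Finset.sum_const, nsmul_eq_mul, hcardE]
      _ ≤ S := by
          apply Finset.sum_le_sum
          intro j hj
          have hmem := hvj j (Finset.ne_of_mem_erase hj)
          nlinarith [div_pos hK2 hDpos]
  have hN2 : ‖v‖ ^ 2 = 1 + S := by rw [hnormsq, hsplit]
  have hNnn : 0 ≤ ‖v‖ := norm_nonneg v
  have hSpos : 0 < S := lt_of_lt_of_le (by positivity) hS_lb
  have hN1 : 1 < ‖v‖ := by nlinarith
  have hNpos : 0 < ‖v‖ := by linarith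
  have hN2ub : ‖v‖ ^ 2 ≤ 1 + K1 ^ 2 / ((d:ℝ) - 1) := by rw [hN2]; linarith
  -- sup = 1
  haveI : Nonempty (Fin d) := ⟨i0⟩
  have hvle1 : ∀ i, |v i| ≤ 1 := by
    intro i
    rw [habs]
    by_cases h : i = i0
    · rw [h, hvi0]
    · have h2 := (hvj i h).2
      have h1s : 1 / (s:ℝ) ≤ 1 := by
        rw [div_le_one hsPos]; linarith
      linarith
  have hsup : (⨆ i, |v i|) = 1 := by
    apply le_antisymm (ciSup_le hvle1)
    have h := le_ciSup (Set.Finite.bddAbove (Set.finite_range fun i => |v i|)) i0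
    rwa [habs, hvi0] at h
  rw [hsup]
  simp only [div_one, one_pow, one_mul]
  -- compute RHS sum
  have hRHS : ∑ i, sigmaSq (unifLevels s) (s - 1) (|v i|) =
      ∑ j ∈ E, (1 / (s:ℝ) - v j) * (v j) := by
    rw [← Finset.add_sum_erase _ _ (Finset.mem_univ i0), habs, hvi0, sigmaSq_unif_one s hs1,
      zero_add]
    apply Finset.sum_congr rfl
    intro j hj
    rw [habs]
    exact sigmaSq_unif_low s hs1 _ (hvnn j)
      (lt_of_le_of_lt (hvj j (Finset.ne_of_mem_erase hj)).2 hK1D)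
  -- small coordinates are below 2^{-s} after normalization
  have hsqrtle : Real.sqrt (1 + K2 ^ 2 / ((d:ℝ) - 1)) ≤ ‖v‖ := by
    rw [show ‖v‖ = Real.sqrt (‖v‖ ^ 2) from (Real.sqrt_sq hNnn).symm]
    apply Real.sqrt_le_sqrt
    rw [hN2]; linarith
  have hsqrtpos : 0 < Real.sqrt (1 + K2 ^ 2 / ((d:ℝ) - 1)) := by positivity
  have hrj_small : ∀ j ∈ E, v j / ‖v‖ < (2:ℝ) ^ (-(s:ℤ)) := by
    intro j hj
    have h2 := (hvj j (Finset.ne_of_mem_erase hj)).2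
    calc v j / ‖v‖ ≤ (K1 / ((d:ℝ) - 1)) / ‖v‖ := by gcongr
      _ ≤ (K1 / ((d:ℝ) - 1)) / Real.sqrt (1 + K2 ^ 2 / ((d:ℝ) - 1)) := by
          gcongr
      _ = K1 / (((d:ℝ) - 1) * Real.sqrt (1 + K2 ^ 2 / ((d:ℝ) - 1))) := by
          rw [div_div]
      _ < (2:ℝ) ^ (-(s:ℤ)) := hcond1
  -- the big coordinate after normalization lies in [2^{-s}, 1)
  have hr0lb : (2:ℝ) ^ (-(s:ℤ)) ≤ 1 / ‖v‖ := by
    rw [le_div_iff₀ hNpos]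
    have hNle : ‖v‖ ≤ ‖v‖ ^ 2 := by nlinarith
    have : ‖v‖ ^ 2 * (2:ℝ) ^ (-(s:ℤ)) < 1 / (s:ℝ) := by
      calc ‖v‖ ^ 2 * (2:ℝ) ^ (-(s:ℤ)) ≤
            (1 + K1 ^ 2 / ((d:ℝ) - 1)) * (2:ℝ) ^ (-(s:ℤ)) := by gcongr
        _ < 1 / (s:ℝ) := h2sX
      -- done
    have h1s : 1 / (s:ℝ) ≤ 1 := by rw [div_le_one hsPos]; linarith
    nlinarith
  have hr0ub : 1 / ‖v‖ < 1 := by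
    rw [div_lt_one hNpos]; exact hN1
  -- compute LHS sum
  have hLHS : ∑ i, sigmaSq (nuqLevels s) s (|v i| / ‖v‖) =
      sigmaSq (nuqLevels s) s (1 / ‖v‖) +
        ∑ j ∈ E, ((2:ℝ) ^ (-(s:ℤ)) - v j / ‖v‖) * (v j / ‖v‖) := by
    rw [← Finset.add_sum_erase _ _ (Finset.mem_univ i0), habs, hvi0]
    congr 1
    apply Finset.sum_congr rfl
    intro j hj
    rw [habs]
    exact sigmaSq_nuq_low s _ (div_nonneg (hvnn j) hNnn) (hrj_small j hj)
  rw [hLHS, hRHS]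
  -- bound the two LHS pieces
  have hA : ‖v‖ ^ 2 * sigmaSq (nuqLevels s) s (1 / ‖v‖) ≤
      (1 + K1 ^ 2 / ((d:ℝ) - 1)) * K1 * (K1 / (4 * ((d:ℝ) - 1))) := by
    have hb := sigmaSq_nuq_le s hs1 (1 / ‖v‖) hr0lb hr0ub
    have heval : (1 - (1 / ‖v‖) ^ 2) / (4 * (1 / ‖v‖) ^ 2) = (‖v‖ ^ 2 - 1) / 4 := by
      field_simp
    rw [heval] at hb
    have h1 : ‖v‖ ^ 2 * sigmaSq (nuqLevels s) s (1 / ‖v‖) ≤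
        ‖v‖ ^ 2 * ((‖v‖ ^ 2 - 1) / 4) := by
      apply mul_le_mul_of_nonneg_left hb (by positivity)
    have h2 : ‖v‖ ^ 2 * ((‖v‖ ^ 2 - 1) / 4) = (1 + S) * S / 4 := by rw [hN2]; ring
    have h3 : (1 + S) * S / 4 ≤
        (1 + K1 ^ 2 / ((d:ℝ) - 1)) * (K1 ^ 2 / ((d:ℝ) - 1)) / 4 := by
      nlinarith
    calc ‖v‖ ^ 2 * sigmaSq (nuqLevels s) s (1 / ‖v‖)
        ≤ ‖v‖ ^ 2 * ((‖v‖ ^ 2 - 1) / 4) := h1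
      _ = (1 + S) * S / 4 := h2
      _ ≤ (1 + K1 ^ 2 / ((d:ℝ) - 1)) * (K1 ^ 2 / ((d:ℝ) - 1)) / 4 := h3
      _ = (1 + K1 ^ 2 / ((d:ℝ) - 1)) * K1 * (K1 / (4 * ((d:ℝ) - 1))) := by
          field_simp
  have hBsum : ∑ j ∈ E, ((2:ℝ) ^ (-(s:ℤ)) - v j / ‖v‖) * (v j / ‖v‖) ≤
      (2:ℝ) ^ (-(s:ℤ)) * (K1 / ‖v‖) := by
    calc ∑ j ∈ E, ((2:ℝ) ^ (-(s:ℤ)) - v j / ‖v‖) * (v j / ‖v‖)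
        ≤ ∑ j ∈ E, (2:ℝ) ^ (-(s:ℤ)) * ((K1 / ((d:ℝ) - 1)) / ‖v‖) := by
          apply Finset.sum_le_sum
          intro j hj
          have hjpos : 0 < v j := hvpos j (Finset.ne_of_mem_erase hj)
          have hjub : v j / ‖v‖ ≤ (K1 / ((d:ℝ) - 1)) / ‖v‖ := by
            gcongr
            exact (hvj j (Finset.ne_of_mem_erase hj)).2
          have hrnn : 0 ≤ v j / ‖v‖ := div_nonneg hjpos.le hNnn
          nlinarith
      _ = ((d:ℝ) - 1) * ((2:ℝ) ^ (-(s:ℤ)) * ((K1 / ((d:ℝ) - 1)) / ‖v‖)) := by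
          rw [Finset.sum_const, nsmul_eq_mul, hcardE]
      _ = (2:ℝ) ^ (-(s:ℤ)) * (K1 / ‖v‖) := by
          rw [div_div]
          field_simp
  have hB : ‖v‖ ^ 2 * ((2:ℝ) ^ (-(s:ℤ)) * (K1 / ‖v‖)) ≤
      (1 + K1 ^ 2 / ((d:ℝ) - 1)) * K1 * (2:ℝ) ^ (-(s:ℤ)) := by
    have he : ‖v‖ ^ 2 * ((2:ℝ) ^ (-(s:ℤ)) * (K1 / ‖v‖)) =
        ‖v‖ * K1 * (2:ℝ) ^ (-(s:ℤ)) := by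
      field_simp
    rw [he]
    have hNle : ‖v‖ ≤ 1 + K1 ^ 2 / ((d:ℝ) - 1) := by nlinarith
    nlinarith [mul_pos hK1 h2s]
  -- RHS lower bound
  have hRHSlb : K2 * (1 / (s:ℝ) - K1 / ((d:ℝ) - 1)) ≤
      ∑ j ∈ E, (1 / (s:ℝ) - v j) * (v j) := by
    calc K2 * (1 / (s:ℝ) - K1 / ((d:ℝ) - 1))
        = ((d:ℝ) - 1) * ((1 / (s:ℝ) - K1 / ((d:ℝ) - 1)) * (K2 / ((d:ℝ) - 1))) := by
          field_simp
      _ = ∑ _j ∈ E, (1 / (s:ℝ) - K1 / ((d:ℝ) - 1)) * (K2 / ((d:ℝ) - 1)) := by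
          rw [Finset.sum_const, nsmul_eq_mul, hcardE]
      _ ≤ ∑ j ∈ E, (1 / (s:ℝ) - v j) * (v j) := by
          apply Finset.sum_le_sum
          intro j hj
          have h1 := (hvj j (Finset.ne_of_mem_erase hj)).1
          have h2 := (hvj j (Finset.ne_of_mem_erase hj)).2
          have hK2D : 0 < K2 / ((d:ℝ) - 1) := div_pos hK2 hDpos
          nlinarith
  -- put everything together
  have hsplit2 : ‖v‖ ^ 2 * (sigmaSq (nuqLevels s) s (1 / ‖v‖) +
      ∑ j ∈ E, ((2:ℝ) ^ (-(s:ℤ)) - v j / ‖v‖) * (v j / ‖v‖)) =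
      ‖v‖ ^ 2 * sigmaSq (nuqLevels s) s (1 / ‖v‖) +
      ‖v‖ ^ 2 * ∑ j ∈ E, ((2:ℝ) ^ (-(s:ℤ)) - v j / ‖v‖) * (v j / ‖v‖) := by ring
  have hBsum2 : ‖v‖ ^ 2 * ∑ j ∈ E, ((2:ℝ) ^ (-(s:ℤ)) - v j / ‖v‖) * (v j / ‖v‖) ≤
      (1 + K1 ^ 2 / ((d:ℝ) - 1)) * K1 * (2:ℝ) ^ (-(s:ℤ)) :=
    le_trans (mul_le_mul_of_nonneg_left hBsum (by positivity)) hB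
  calc ‖v‖ ^ 2 * (sigmaSq (nuqLevels s) s (1 / ‖v‖) +
        ∑ j ∈ E, ((2:ℝ) ^ (-(s:ℤ)) - v j / ‖v‖) * (v j / ‖v‖))
      ≤ (1 + K1 ^ 2 / ((d:ℝ) - 1)) * K1 *
        (K1 / (4 * ((d:ℝ) - 1)) + (2:ℝ) ^ (-(s:ℤ))) := by
        rw [hsplit2]
        have := add_le_add hA hBsum2
        linarith
    _ < K2 * (1 / (s:ℝ) - K1 / ((d:ℝ) - 1)) := hcond2
    _ ≤ ∑ j ∈ E, (1 / (s:ℝ) - v j) * (v j) := hRHSlb
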